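/- In the set-cover instance game with the non-deterministic greedy algorithm, with α < β/2 and m > n, if S is a pure Nash equilibrium containing at least one agent i with S_i = U, then every other agent j has either S_j = U or S_j = ∅. -/

import Mathlib

open Finset

section SCIG

variable {α : Type*} [DecidableEq α] {m : ℕ}

/-- Inner loop of the greedy algorithm: scan the remaining order, keeping the
subset covering the most as-yet-uncovered elements (ties broken by order). -/
def bestIdx (S : Fin m → Finset α) (Ucov : Finset α) : List (Fin m) → Fin m → Fin m
  | [], b => b
  | i :: rest, b =>
      bestIdx S Ucov rest (if (S b ∩ Ucov).card < (S i ∩ Ucov).card then i else b)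

/-- Greedy set-cover: repeatedly select the subset (scanned in `order`) covering
the most uncovered elements, until nothing new can be covered.  Returns the
selected agents, in order of selection. -/
def greedyList (S : Fin m → Finset α) (order : List (Fin m)) (Ucov : Finset α) :
    List (Fin m) :=
  match order with
  | [] => []
  | b :: rest =>
    let best := bestIdx S Ucov rest b
    if h : (S best ∩ Ucov).Nonempty then
      best :: greedyList S (b :: rest) (Ucov \ S best)
    else []
termination_by Ucov.card
decreasing_by
  apply Finset.card_lt_card
  refine ⟨Finset.sdiff_subset, fun hsub => ?_⟩
  obtain ⟨x, hx⟩ := h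
  have hx1 := (Finset.mem_inter.mp hx).1
  have hx2 := (Finset.mem_inter.mp hx).2
  have := hsub hx2
  simp [Finset.mem_sdiff, hx1] at this
  exact this.2 hx1

/-- The set-cover instance induced by a joint strategy: its universe. -/
def unionSet (S : Fin m → Finset α) : Finset α := Finset.univ.biUnion S

/-- The cover computed by the deterministic greedy algorithm (fixed order 1..m). -/
def coverD (S : Fin m → Finset α) : Finset (Fin m) :=
  (greedyList S (List.finRange m) (unionSet S)).toFinset

/-- Utility of agent `i` in the deterministic game. -/
noncomputable def utilD (beta alpha : ℝ) (S : Fin m → Finset α) (i : Fin m) : ℝ :=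
  (if i ∈ coverD S then beta else 0) - alpha * (S i).card

/-- Pure Nash equilibrium of the deterministic game. -/
def IsNashD (beta alpha : ℝ) (S : Fin m → Finset α) : Prop :=
  ∀ (i : Fin m) (T : Finset α),
    utilD beta alpha (Function.update S i T) i ≤ utilD beta alpha S i

/-- Probability (over a uniformly random permutation of the agents) that agent
`i`'s subset is selected by the non-deterministic greedy algorithm. -/
noncomputable def probSel (S : Fin m → Finset α) (i : Fin m) : ℝ :=
  (Finset.univ.filter (fun π : Equiv.Perm (Fin m) =>
      i ∈ greedyList S ((List.finRange m).map π) (unionSet S))).card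
    / (Nat.factorial m)

/-- Expected utility of agent `i` in the non-deterministic game. -/
noncomputable def utilN (beta alpha : ℝ) (S : Fin m → Finset α) (i : Fin m) : ℝ :=
  beta * probSel S i - alpha * (S i).card

/-- Pure Nash equilibrium of the non-deterministic game. -/
def IsNashN (beta alpha : ℝ) (S : Fin m → Finset α) : Prop :=
  ∀ (i : Fin m) (T : Finset α),
    utilN beta alpha (Function.update S i T) i ≤ utilN beta alpha S i

end SCIG

section AuxLemmas
variable {α : Type*} [DecidableEq α] {m : ℕ}

lemma bestIdx_le (S : Fin m → Finset α) (U : Finset α) :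
    ∀ (l : List (Fin m)) (b : Fin m),
      (S b ∩ U).card ≤ (S (bestIdx S U l b) ∩ U).card := by
  intro l
  induction l with
  | nil => intro b; simp [bestIdx]
  | cons x rest ih =>
    intro b
    rw [bestIdx]
    split
    · exact le_trans (le_of_lt (by assumption)) (ih x)
    · exact ih b

lemma bestIdx_mem_le (S : Fin m → Finset α) (U : Finset α) :
    ∀ (l : List (Fin m)) (b x : Fin m), x ∈ l →
      (S x ∩ U).card ≤ (S (bestIdx S U l b) ∩ U).card := by
  intro l
  induction l with
  | nil => intro b x hx; simp at hx
  | cons y rest ih =>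
    intro b x hx
    rcases List.mem_cons.mp hx with h | h
    · subst h
      rw [bestIdx]
      split
      · exact bestIdx_le S U rest x
      · exact le_trans (le_of_not_gt (by assumption)) (bestIdx_le S U rest b)
    · rw [bestIdx]; exact ih _ x h

lemma greedyList_empty (S : Fin m → Finset α) (l : List (Fin m)) :
    greedyList S l (∅ : Finset α) = [] := by
  rw [greedyList.eq_def]
  cases l with
  | nil => rfl
  | cons b rest => simp

/-- If some agent in the order has the full universe, then every member of the
greedy output (on universe `univ`) has the full universe. -/
lemma mem_greedy_full [Fintype α] (S : Fin m → Finset α) (i : Fin m)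
    (hi : S i = Finset.univ) (l : List (Fin m)) (hil : i ∈ l)
    (j : Fin m) (hj : j ∈ greedyList S l (Finset.univ : Finset α)) :
    S j = Finset.univ := by
  cases l with
  | nil => simp at hil
  | cons b rest =>
    rw [greedyList.eq_def] at hj
    set best := bestIdx S (Finset.univ : Finset α) rest b with hbest
    have hcard : (Finset.univ : Finset α).card ≤ (S best ∩ Finset.univ).card := by
      have h1 : (S i ∩ Finset.univ).card ≤ (S best ∩ Finset.univ).card := by
        rcases List.mem_cons.mp hil with h | h
        · subst h; exact bestIdx_le S _ rest i
        · exact bestIdx_mem_le S _ rest b i h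
      simpa [Finset.inter_univ, hi] using h1
    have hfull : S best = Finset.univ := by
      apply Finset.eq_univ_of_card
      exact le_antisymm (Finset.card_le_univ _) (by simpa [Finset.inter_univ] using hcard)
    simp only at hj
    by_cases hne : (S best ∩ Finset.univ).Nonempty
    · rw [dif_pos hne] at hj
      rw [hfull, Finset.sdiff_self, greedyList_empty] at hj
      simp at hj
      subst hj; exact hfull
    · rw [dif_neg hne] at hj
      simp at hj

end AuxLemmas

/-- With the non-deterministic greedy algorithm, α < β/2 and
m > n, if a pure Nash equilibrium has some agent with S_i = U, then every
other agent chooses either U or ∅. -/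
theorem scigN_full_or_empty {α : Type*} [Fintype α] [DecidableEq α] {m : ℕ}
    (beta alpha : ℝ) (hbeta : 0 < beta) (halpha : 0 < alpha)
    (hab : alpha < beta / 2) (hmn : Fintype.card α < m)
    (S : Fin m → Finset α) (hN : IsNashN beta alpha S)
    (i : Fin m) (hi : S i = Finset.univ) :
    ∀ j : Fin m, j ≠ i → S j = Finset.univ ∨ S j = ∅ := by
  intro j hjne
  by_cases hju : S j = Finset.univ
  · exact Or.inl hju
  · right
    by_contra hne
    have hjnonempty : (S j).Nonempty := Finset.nonempty_iff_ne_empty.mpr hne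
    have hU : unionSet S = Finset.univ := by
      apply Finset.eq_univ_iff_forall.mpr
      intro x
      exact Finset.mem_biUnion.mpr ⟨i, Finset.mem_univ i, by simp [hi]⟩
    have hp0 : probSel S j = 0 := by
      unfold probSel
      have hfe : (Finset.univ.filter (fun π : Equiv.Perm (Fin m) =>
          j ∈ greedyList S ((List.finRange m).map π) (unionSet S))) = ∅ := by
        apply Finset.filter_eq_empty_iff.mpr
        intro π _ hmem
        rw [hU] at hmem
        have hil : i ∈ (List.finRange m).map π := by
          exact List.mem_map.mpr ⟨π.symm i, List.mem_finRange _, by simp⟩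
        exact hju (mem_greedy_full S i hi _ hil j hmem)
      rw [hfe]
      simp
    have h := hN j ∅
    have hps : 0 ≤ probSel (Function.update S j ∅) j := by
      unfold probSel
      positivity
    have hcpos : (0 : ℝ) < ((S j).card : ℝ) := by
      exact_mod_cast Finset.card_pos.mpr hjnonempty
    unfold utilN at h
    rw [hp0, Function.update_self] at h
    simp only [Finset.card_empty, Nat.cast_zero, mul_zero, sub_zero] at h
    nlinarith
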